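/- Let 𝔽 be a field, k ≥ 2, and let φ_0, φ_1, …, φ_k ∈ 𝔽[λ] satisfy deg φ_i = i for every i (a degree-graded family). Let α, β, γ ∈ 𝔽 with α ≠ 0, and assume the three-term recurrence α·φ_{j+1}(λ) = (λ−β)·φ_j(λ) − γ·φ_{j−1}(λ) holds for all 1 ≤ j ≤ k−1. Define the k×(k+1) matrix pencil L_{k,φ}(λ) whose rows r = 1,…,k−1 have entries α in position (r,r), β−λ in position (r,r+1), γ in position (r,r+2) and zeros elsewhere, and whose last row has φ_0(λ) in position (k,k) and −φ_1(λ) in position (k,k+1) and zeros elsewhere. Then L_{k,φ}(λ)·π_{k,φ}(λ) = 0 identically, L_{k,φ}(λ₀) has rank k for every λ₀ ∈ 𝔽, and the k×(k+1) matrix formed by the coefficients of λ in the entries of L_{k,φ}(λ) has rank k. -/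

import Mathlib

open Polynomial Matrix

namespace PaperLin

variable {F : Type*} [Field F]

lemma sum_eq_three {n : ℕ} {M : Type*} [AddCommMonoid M] (f : Fin n → M) (a b c : Fin n)
    (hab : a ≠ b) (hac : a ≠ c) (hbc : b ≠ c)
    (h : ∀ x, x ≠ a → x ≠ b → x ≠ c → f x = 0) :
    ∑ x, f x = f a + f b + f c := by
  classical
  have key : ∀ x : Fin n, f x =
      (if x = a then f a else 0) + (if x = b then f b else 0) + (if x = c then f c else 0) := by
    intro x
    by_cases h1 : x = a
    · subst h1; simp [hab, hac]
    by_cases h2 : x = b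
    · subst h2; simp [hab.symm, hbc]
    by_cases h3 : x = c
    · subst h3; simp [hac.symm, hbc.symm]
    · simp [h1, h2, h3, h x h1 h2 h3]
  rw [Finset.sum_congr rfl (fun x _ => key x)]
  simp [Finset.sum_add_distrib, Finset.sum_ite_eq']

lemma sum_eq_two {n : ℕ} {M : Type*} [AddCommMonoid M] (f : Fin n → M) (a b : Fin n)
    (hab : a ≠ b) (h : ∀ x, x ≠ a → x ≠ b → f x = 0) :
    ∑ x, f x = f a + f b := by
  classical
  have key : ∀ x : Fin n, f x =
      (if x = a then f a else 0) + (if x = b then f b else 0) := by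
    intro x
    by_cases h1 : x = a
    · subst h1; simp [hab]
    by_cases h2 : x = b
    · subst h2; simp [hab.symm]
    · simp [h1, h2, h x h1 h2]
  rw [Finset.sum_congr rfl (fun x _ => key x)]
  simp [Finset.sum_add_distrib, Finset.sum_ite_eq']

lemma rank_full {k : ℕ} (A : Matrix (Fin k) (Fin (k+1)) F) (g : Fin k → Fin (k+1))
    (h : IsUnit (A.submatrix id g).det) : A.rank = k := by
  refine le_antisymm ?_ ?_
  · simpa using A.rank_le_card_height
  · have h1 : A.submatrix id g
        = A * (1 : Matrix (Fin (k+1)) (Fin (k+1)) F).submatrix (Equiv.refl _) g := by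
      rw [Matrix.mul_submatrix_one]; rfl
    have h2 := Matrix.rank_mul_le_left A
      ((1 : Matrix (Fin (k+1)) (Fin (k+1)) F).submatrix (Equiv.refl _) g)
    rw [← h1] at h2
    have h3 : (A.submatrix id g).rank = k := by
      rw [Matrix.rank_of_isUnit _ ((Matrix.isUnit_iff_isUnit_det _).mpr h), Fintype.card_fin]
    omega

theorem statement3 (k : ℕ) (hk : 2 ≤ k) (φ : ℕ → Polynomial F)
    (hdeg : ∀ i ≤ k, (φ i).degree = (i : WithBot ℕ))
    (α β γ : F) (hα : α ≠ 0)
    (hrec : ∀ j, 1 ≤ j → j ≤ k - 1 →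
      Polynomial.C α * φ (j + 1) =
        (Polynomial.X - Polynomial.C β) * φ j - Polynomial.C γ * φ (j - 1)) :
    let L : Matrix (Fin k) (Fin (k + 1)) (Polynomial F) :=
      Matrix.of fun r c =>
        if (r : ℕ) < k - 1 then
          if (c : ℕ) = (r : ℕ) then Polynomial.C α
          else if (c : ℕ) = (r : ℕ) + 1 then Polynomial.C β - Polynomial.X
          else if (c : ℕ) = (r : ℕ) + 2 then Polynomial.C γ
          else 0
        else
          if (c : ℕ) = (r : ℕ) then φ 0
          else if (c : ℕ) = (r : ℕ) + 1 then -(φ 1)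
          else 0
    L.mulVec (fun i : Fin (k + 1) => φ (k - (i : ℕ))) = 0 ∧
    (∀ x : F, (L.map (Polynomial.eval x)).rank = k) ∧
    (Matrix.of fun (r : Fin k) (c : Fin (k + 1)) => (L r c).coeff 1).rank = k := by
  intro L
  have hL : ∀ (r : Fin k) (c : Fin (k+1)), L r c =
      (if (r : ℕ) < k - 1 then
          if (c : ℕ) = (r : ℕ) then Polynomial.C α
          else if (c : ℕ) = (r : ℕ) + 1 then Polynomial.C β - Polynomial.X
          else if (c : ℕ) = (r : ℕ) + 2 then Polynomial.C γ
          else 0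
        else
          if (c : ℕ) = (r : ℕ) then φ 0
          else if (c : ℕ) = (r : ℕ) + 1 then -(φ 1)
          else 0) := fun _ _ => rfl
  have hφ0 : (φ 0).degree = 0 := by simpa using hdeg 0 (by omega)
  have hφ1 : (φ 1).degree = 1 := by simpa using hdeg 1 (by omega)
  have hφ0ne : φ 0 ≠ 0 := fun h => by simp [h] at hφ0
  have hφ1ne : φ 1 ≠ 0 := fun h => by simp [h] at hφ1
  have hφ0ev : ∀ x : F, (φ 0).eval x ≠ 0 := by
    intro x
    have hc := Polynomial.eq_C_of_degree_le_zero (le_of_eq hφ0)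
    have hcne : (φ 0).coeff 0 ≠ 0 := fun h => hφ0ne (by rw [hc, h, map_zero])
    rw [hc]; simp [hcne]
  have hφ1c : (φ 1).coeff 1 ≠ 0 := by
    have h1 : (φ 1).natDegree = 1 := natDegree_eq_of_degree_eq_some hφ1
    have := Polynomial.leadingCoeff_ne_zero.mpr hφ1ne
    rwa [Polynomial.leadingCoeff, h1] at this
  have hφ0c1 : (φ 0).coeff 1 = 0 :=
    Polynomial.coeff_eq_zero_of_degree_lt (by rw [hφ0]; exact_mod_cast zero_lt_one)
  refine ⟨?_, ?_, ?_⟩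
  · -- Part 1: mulVec = 0
    funext r
    simp only [Matrix.mulVec, dotProduct, Pi.zero_apply]
    by_cases hr : (r : ℕ) < k - 1
    · have hr2 : (r : ℕ) + 2 < k + 1 := by omega
      set a : Fin (k+1) := ⟨(r : ℕ), by omega⟩ with ha
      set b : Fin (k+1) := ⟨(r : ℕ)+1, by omega⟩ with hb
      set d : Fin (k+1) := ⟨(r : ℕ)+2, hr2⟩ with hd
      have hav : (a : ℕ) = (r : ℕ) := rfl
      have hbv : (b : ℕ) = (r : ℕ) + 1 := rfl
      have hdv : (d : ℕ) = (r : ℕ) + 2 := rfl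
      rw [sum_eq_three (fun c => L r c * φ (k - (c : ℕ))) a b d
        (by simp [ha, hb, Fin.ext_iff]) (by simp [ha, hd, Fin.ext_iff])
        (by simp [hb, hd, Fin.ext_iff])
        (fun x hx1 hx2 hx3 => by
          have h1 : (x : ℕ) ≠ (r : ℕ) := fun h => hx1 (Fin.ext (by simpa [ha] using h))
          have h2 : (x : ℕ) ≠ (r : ℕ) + 1 := fun h => hx2 (Fin.ext (by simpa [hb] using h))
          have h3 : (x : ℕ) ≠ (r : ℕ) + 2 := fun h => hx3 (Fin.ext (by simpa [hd] using h))
          simp [hL, hr, h1, h2, h3])]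
      have hfa : L r a = Polynomial.C α := by
        rw [hL, if_pos hr, if_pos (show (a : ℕ) = (r : ℕ) from rfl)]
      have hfb : L r b = Polynomial.C β - Polynomial.X := by
        rw [hL, if_pos hr, if_neg (show ¬((b : ℕ) = (r : ℕ)) from by rw [hbv]; omega),
          if_pos hbv]
      have hfd : L r d = Polynomial.C γ := by
        rw [hL, if_pos hr, if_neg (show ¬((d : ℕ) = (r : ℕ)) from by rw [hdv]; omega),
          if_neg (show ¬((d : ℕ) = (r : ℕ) + 1) from by rw [hdv]; omega),
          if_pos hdv]
      show L r a * φ (k - (a : ℕ)) + L r b * φ (k - (b : ℕ)) + L r d * φ (k - (d : ℕ)) = 0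
      rw [hfa, hfb, hfd, show (a : ℕ) = (r : ℕ) from rfl, show (b : ℕ) = (r : ℕ) + 1 from rfl,
        show (d : ℕ) = (r : ℕ) + 2 from rfl]
      have hrec' := hrec (k - ((r : ℕ) + 1)) (by omega) (by omega)
      rw [show (k - ((r : ℕ) + 1)) + 1 = k - (r : ℕ) from by omega,
        show (k - ((r : ℕ) + 1)) - 1 = k - ((r : ℕ) + 2) from by omega] at hrec'
      linear_combination hrec'
    · have hrk : (r : ℕ) = k - 1 := by have := r.isLt; omega
      set a : Fin (k+1) := ⟨k-1, by omega⟩ with ha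
      set b : Fin (k+1) := ⟨k, by omega⟩ with hb
      have hav : (a : ℕ) = k - 1 := rfl
      have hbv : (b : ℕ) = k := rfl
      rw [sum_eq_two (fun c => L r c * φ (k - (c : ℕ))) a b
        (by simp [ha, hb, Fin.ext_iff]; omega)
        (fun x hx1 hx2 => by
          have h1 : (x : ℕ) ≠ (r : ℕ) := fun h => hx1 (Fin.ext (by simp [ha]; omega))
          have h2 : (x : ℕ) ≠ (r : ℕ) + 1 := fun h => hx2 (Fin.ext (by simp [hb]; omega))
          simp [hL, hr, h1, h2])]
      have hfa : L r a = φ 0 := by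
        rw [hL, if_neg hr, if_pos (show (a : ℕ) = (r : ℕ) from by rw [hav, hrk])]
      have hfb : L r b = -(φ 1) := by
        rw [hL, if_neg hr, if_neg (show ¬((b : ℕ) = (r : ℕ)) from by rw [hbv]; omega),
          if_pos (show (b : ℕ) = (r : ℕ) + 1 from by rw [hbv]; omega)]
      show L r a * φ (k - (a : ℕ)) + L r b * φ (k - (b : ℕ)) = 0
      rw [hfa, hfb, show (a : ℕ) = k - 1 from rfl, show (b : ℕ) = k from rfl,
        show k - (k - 1) = 1 from by omega, show k - k = 0 from by omega]
      ring
  · -- Part 2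
    intro x
    apply rank_full (L.map (Polynomial.eval x)) Fin.castSucc
    have htri : ((L.map (Polynomial.eval x)).submatrix id Fin.castSucc).BlockTriangular id := by
      intro i j hij
      have hji : (j : ℕ) < (i : ℕ) := hij
      have h1 : ¬ ((j : ℕ) = (i : ℕ)) := by omega
      have h2 : ¬ ((j : ℕ) = (i : ℕ) + 1) := by omega
      have h3 : ¬ ((j : ℕ) = (i : ℕ) + 2) := by omega
      simp [Matrix.submatrix_apply, Matrix.map_apply, hL, h1, h2, h3]
    rw [Matrix.det_of_upperTriangular htri, isUnit_iff_ne_zero, Finset.prod_ne_zero_iff]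
    intro i _
    by_cases hi : (i : ℕ) < k - 1
    · simp [hL, hi, hα]
    · simp [hL, hi, hφ0ev x]
  · -- Part 3
    apply rank_full _ Fin.succ
    have htri : (((Matrix.of fun (r : Fin k) (c : Fin (k + 1)) => (L r c).coeff 1).submatrix id
        Fin.succ)).BlockTriangular id := by
      intro i j hij
      have hji : (j : ℕ) < (i : ℕ) := hij
      have h2 : ¬ ((j : ℕ) + 1 = (i : ℕ) + 1) := by omega
      have h3 : ¬ ((j : ℕ) + 1 = (i : ℕ) + 2) := by omega
      simp [Matrix.submatrix_apply, hL, h2, h3, Polynomial.coeff_C, hφ0c1,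
        show ¬ ((j : ℕ) = (i : ℕ)) by omega, apply_ite (fun p : Polynomial F => p.coeff 1)]
    rw [Matrix.det_of_upperTriangular htri, isUnit_iff_ne_zero, Finset.prod_ne_zero_iff]
    intro i _
    have h1 : ¬ ((i : ℕ) + 1 = (i : ℕ)) := by omega
    by_cases hi : (i : ℕ) < k - 1
    · simp [hL, hi, h1, Polynomial.coeff_C]
    · simp [hL, hi, h1, hφ1c]

end PaperLin
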